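/- For infinite cardinals κ ≤ λ, the cofinality of the everywhere domination order on ^(λ⁺)κ equals the cofinality of the eventual domination order on ^(λ⁺)κ. -/

import Mathlib

open Cardinal Order

/-- The cofinality of the everywhere (pointwise) domination order on functions `X → K`. -/
noncomputable def everyCof (X K : Type*) [LE K] : Cardinal :=
  sInf {c | ∃ D : Set (X → K), #D = c ∧ ∀ f : X → K, ∃ g ∈ D, ∀ x, f x ≤ g x}

/-- The cofinality of the eventual domination order on functions `X → K`. -/
noncomputable def evenCof (X K : Type*) [LE X] [LE K] : Cardinal :=
  sInf {c | ∃ D : Set (X → K), #D = c ∧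
    ∀ f : X → K, ∃ g ∈ D, ∃ a : X, ∀ b : X, a ≤ b → f b ≤ g b}

section Aux

variable {k l : Cardinal}

/-- Initial segments of the order `(succ l).ord.ToType` have cardinality at most `l`. -/
lemma aux_mk_Iic_le (hl : ℵ₀ ≤ l) (a : (Order.succ l).ord.ToType) :
    #(Set.Iic a) ≤ l := by
  have h := Ordinal.typein_lt_self a
  rw [Cardinal.lt_ord] at h
  have h2 : #(Set.Iio a) ≤ l := Order.lt_succ_iff.mp h
  have h3 : (Set.Iic a : Set _) = insert a (Set.Iio a) := by
    ext x; simp [le_iff_lt_or_eq, or_comm]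
  calc #(Set.Iic a) ≤ #(Set.Iio a) + 1 := by rw [h3]; exact Cardinal.mk_insert_le
    _ ≤ l + 1 := by gcongr
    _ = l := Cardinal.add_one_eq hl

/-- Any eventually dominating family on `^{λ⁺}κ` has cardinality at least `λ⁺`. -/
lemma aux_lower (hk : ℵ₀ ≤ k) (hkl : k ≤ l)
    (D : Set ((Order.succ l).ord.ToType → k.ord.ToType))
    (hdom : ∀ f : (Order.succ l).ord.ToType → k.ord.ToType,
      ∃ g ∈ D, ∃ a : (Order.succ l).ord.ToType, ∀ b, a ≤ b → f b ≤ g b) :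
    Order.succ l ≤ #D := by
  let X := (Order.succ l).ord.ToType
  let K := k.ord.ToType
  have hl : ℵ₀ ≤ l := hk.trans hkl
  have hsl : ℵ₀ ≤ Order.succ l := hl.trans (le_succ l)
  haveI : NoMaxOrder K := Cardinal.noMaxOrder hk
  have hX : #X = Order.succ l := Cardinal.mk_ord_toType _
  haveI hKne : Nonempty K := Ordinal.toType_nonempty_iff_ne_zero.mpr
    (by rw [Ne, Cardinal.ord_eq_zero]; exact (aleph0_pos.trans_le hk).ne')
  by_contra hlt
  push_neg at hlt
  have hDle : #D ≤ l := Order.lt_succ_iff.mp hlt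
  have hDne : D.Nonempty := by
    obtain ⟨g, hg, -⟩ := hdom (fun _ => Classical.arbitrary K)
    exact ⟨g, hg⟩
  have hDne' : (#↥D) ≠ 0 := Cardinal.mk_ne_zero_iff.mpr hDne.to_subtype
  have hprod : #(↥D × X) = Order.succ l := by
    simp only [Cardinal.mk_prod, Cardinal.lift_id]
    rw [hX, Cardinal.mul_eq_right hsl (hDle.trans (le_succ l)) hDne']
  obtain ⟨e⟩ : Nonempty (X ≃ ↥D × X) := Cardinal.eq.mp (hX.trans hprod.symm)
  set f : X → K := fun x => Classical.choose (exists_gt (((e x).1 : X → K) x)) with hf_def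
  have hf : ∀ x, ((e x).1 : X → K) x < f x := fun x =>
    Classical.choose_spec (exists_gt (((e x).1 : X → K) x))
  obtain ⟨g, hg, a, ha⟩ := hdom f
  set j : X → X := fun y => e.symm (⟨g, hg⟩, y) with hj_def
  have hjinj : Function.Injective j := fun y₁ y₂ h => by
    have := congrArg e h
    simp only [hj_def, Equiv.apply_symm_apply, Prod.mk.injEq] at this
    exact this.2
  have hrange : #(Set.range j) = Order.succ l := by
    rw [Cardinal.mk_range_eq _ hjinj, hX]
  have hnotsub : ¬ Set.range j ⊆ Set.Iic a := by
    intro hsub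
    have h1 := Cardinal.mk_le_mk_of_subset hsub
    rw [hrange] at h1
    exact absurd (h1.trans (aux_mk_Iic_le hl a)) (not_le.mpr (Order.lt_succ l))
  obtain ⟨b, hb, hb'⟩ : ∃ b ∈ Set.range j, b ∉ Set.Iic a := Set.not_subset.mp hnotsub
  obtain ⟨y, rfl⟩ := hb
  have hab : a ≤ j y := le_of_not_ge (by simpa using hb')
  have h1 : f (j y) ≤ g (j y) := ha _ hab
  have h2 : g (j y) < f (j y) := by
    have := hf (j y)
    rwa [show e (j y) = (⟨g, hg⟩, y) from Equiv.apply_symm_apply e _] at this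
  exact absurd h1 (not_le.mpr h2)

end Aux

theorem stmt_7 (k l : Cardinal) (hk : ℵ₀ ≤ k) (hkl : k ≤ l) :
    everyCof (Order.succ l).ord.ToType k.ord.ToType
      = evenCof (Order.succ l).ord.ToType k.ord.ToType := by
  set X := (Order.succ l).ord.ToType with hXdef
  set K := k.ord.ToType with hKdef
  have hl : ℵ₀ ≤ l := hk.trans hkl
  have hsl : ℵ₀ ≤ Order.succ l := hl.trans (le_succ l)
  have hX : #X = Order.succ l := Cardinal.mk_ord_toType _
  haveI hXne : Nonempty X := Ordinal.toType_nonempty_iff_ne_zero.mpr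
    (by rw [Ne, Cardinal.ord_eq_zero]; exact (aleph0_pos.trans_le hsl).ne')
  set Sev : Set Cardinal := {c | ∃ D : Set (X → K), #D = c ∧
    ∀ f : X → K, ∃ g ∈ D, ∃ a : X, ∀ b : X, a ≤ b → f b ≤ g b} with hSev
  set Sall : Set Cardinal := {c | ∃ D : Set (X → K), #D = c ∧
    ∀ f : X → K, ∃ g ∈ D, ∀ x, f x ≤ g x} with hSall
  have hSevne : Sev.Nonempty :=
    ⟨#(Set.univ : Set (X → K)), Set.univ, rfl,
      fun f => ⟨f, Set.mem_univ f, Classical.arbitrary X, fun b _ => le_rfl⟩⟩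
  have hSallne : Sall.Nonempty :=
    ⟨#(Set.univ : Set (X → K)), Set.univ, rfl, fun f => ⟨f, Set.mem_univ f, fun _ => le_rfl⟩⟩
  refine le_antisymm ?_ ?_
  · -- everyCof ≤ evenCof
    obtain ⟨D, hD, hdom⟩ : evenCof X K ∈ Sev := csInf_mem hSevne
    have hDD : Order.succ l ≤ #D := aux_lower hk hkl D hdom
    have hDinf : ℵ₀ ≤ #D := hsl.trans hDD
    have hXX : #(X × X) = #X := by
      simp only [Cardinal.mk_prod, Cardinal.lift_id]
      rw [hX, Cardinal.mul_eq_self hsl]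
    obtain ⟨e⟩ : Nonempty (X × X ≃ X) := Cardinal.eq.mp hXX
    set F : ↥D × X → (X → K) := fun p ξ => (p.1 : X → K) (e (p.2, ξ)) with hFdef
    set E : Set (X → K) := Set.range F with hEdef
    have hEcard : #E ≤ #D := by
      calc #E ≤ #(↥D × X) := Cardinal.mk_range_le
        _ = #D * Order.succ l := by simp only [Cardinal.mk_prod, Cardinal.lift_id]; rw [hX]
        _ = #D := Cardinal.mul_eq_left hDinf hDD (aleph0_pos.trans_le hsl).ne'
    have hEdom : ∀ f : X → K, ∃ h ∈ E, ∀ ξ, f ξ ≤ h ξ := by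
      intro f
      obtain ⟨g, hg, a, ha⟩ := hdom (fun x => f (e.symm x).2)
      have hbad : #((fun x : X => (e.symm x).1) '' Set.Iio a) < #X := by
        calc #((fun x : X => (e.symm x).1) '' Set.Iio a) ≤ #(Set.Iio a) :=
              Cardinal.mk_image_le
          _ ≤ #(Set.Iic a) := Cardinal.mk_le_mk_of_subset Set.Iio_subset_Iic_self
          _ ≤ l := aux_mk_Iic_le hl a
          _ < #X := by rw [hX]; exact Order.lt_succ l
      obtain ⟨η, hη⟩ : ∃ η : X, η ∉ (fun x : X => (e.symm x).1) '' Set.Iio a := by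
        by_contra hcon
        push_neg at hcon
        have huniv : (Set.univ : Set X) ⊆ (fun x : X => (e.symm x).1) '' Set.Iio a :=
          fun x _ => hcon x
        have := Cardinal.mk_le_mk_of_subset huniv
        rw [Cardinal.mk_univ] at this
        exact absurd this (not_le.mpr hbad)
      refine ⟨F (⟨g, hg⟩, η), ⟨(⟨g, hg⟩, η), rfl⟩, fun ξ => ?_⟩
      have haξ : a ≤ e (η, ξ) := by
        by_contra hcon
        exact hη ⟨e (η, ξ), not_le.mp hcon, by simp⟩
      have := ha (e (η, ξ)) haξ
      simpa [hFdef] using this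
    calc everyCof X K ≤ #E := csInf_le' ⟨E, rfl, hEdom⟩
      _ ≤ #D := hEcard
      _ = evenCof X K := hD
  · -- evenCof ≤ everyCof
    obtain ⟨E, hE, hdom⟩ : everyCof X K ∈ Sall := csInf_mem hSallne
    refine hE ▸ csInf_le' ⟨E, rfl, fun f => ?_⟩
    obtain ⟨g, hg, hgf⟩ := hdom f
    exact ⟨g, hg, Classical.arbitrary X, fun b _ => hgf b⟩
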